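/- Let A ⊂ B be a partially cleft H-extension via γ, γ'. Set γ̄ = γ' * γ * γ'. Then γ̄ * γ * γ̄ = γ̄, and the pair (γ, γ̄) again satisfies all the axioms (i)–(vii) of a partially cleft extension; moreover γ * γ̄ = γ * γ' and γ̄ * γ = γ' * γ. -/

import Mathlib

open TensorProduct

noncomputable section

/-- Convolution product of linear maps `H → B`. -/
def conv {k H B : Type} [CommRing k] [Ring H] [HopfAlgebra k H]
    [Ring B] [Algebra k B] (f g : H →ₗ[k] B) : H →ₗ[k] B :=
  LinearMap.mul' k B ∘ₗ TensorProduct.map f g ∘ₗ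
    (Coalgebra.comul : H →ₗ[k] H ⊗[k] H)

/-- The comultiplication of the tensor product coalgebra `H ⊗ H`. -/
def comulTwo {k H : Type} [CommRing k] [Ring H] [HopfAlgebra k H] :
    H ⊗[k] H →ₗ[k] (H ⊗[k] H) ⊗[k] (H ⊗[k] H) :=
  (TensorProduct.tensorTensorTensorComm k H H H H).toLinearMap ∘ₗ
    TensorProduct.map (Coalgebra.comul (R := k)) (Coalgebra.comul (R := k))

/-- Convolution product in `Hom(H ⊗ H, B)`. -/
def conv2 {k H B : Type} [CommRing k] [Ring H] [HopfAlgebra k H]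
    [Ring B] [Algebra k B] (f g : H ⊗[k] H →ₗ[k] B) : H ⊗[k] H →ₗ[k] B :=
  LinearMap.mul' k B ∘ₗ TensorProduct.map f g ∘ₗ comulTwo

/-- `A = B^{co H} ⊆ B` is a partially cleft `H`-extension via the pair
`(γ, γ')` (Definition 5.1). -/
structure IsPartiallyCleft {k H B : Type} [CommRing k] [Ring H]
    [HopfAlgebra k H] [Ring B] [Algebra k B]
    (ρ : B →ₗ[k] B ⊗[k] H) (γ γ' : H →ₗ[k] B) : Prop where
  /-- (i) `γ(1) = 1` -/
  map_one : γ 1 = 1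
  /-- (ii) `γ` is a comodule map -/
  comod : ∀ h : H, ρ (γ h) =
    (TensorProduct.map γ LinearMap.id) (Coalgebra.comul (R := k) h)
  /-- (ii) `ρ ∘ γ' = (γ' ⊗ S) ∘ Δᶜᵒᵖ` -/
  comod' : ∀ h : H, ρ (γ' h) =
    (TensorProduct.map γ' (HopfAlgebra.antipode (R := k)))
      ((TensorProduct.comm k H H) (Coalgebra.comul (R := k) h))
  /-- `(γ * γ') ∘ M` takes values in the coinvariants -/
  conv_coinv : ∀ h : H, ρ (conv γ γ' h) = conv γ γ' h ⊗ₜ[k] 1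
  /-- (iii) `(γ * γ') ∘ M` is central in `Hom(H ⊗ H, A)` -/
  conv_central : ∀ T : H ⊗[k] H →ₗ[k] B, (∀ x, ρ (T x) = T x ⊗ₜ[k] 1) →
    conv2 (conv γ γ' ∘ₗ LinearMap.mul' k H) T =
      conv2 T (conv γ γ' ∘ₗ LinearMap.mul' k H)
  /-- (iii) each `(γ' * γ)(h)` commutes with the coinvariants -/
  conv'_comm : ∀ (h : H) (a : B), ρ a = a ⊗ₜ[k] 1 →
    conv γ' γ h * a = a * conv γ' γ h
  /-- (iv) `Σ b₀ γ'(b₁) γ(b₂) = b` -/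
  expand : ∀ b : B,
    (LinearMap.mul' k B) ((LinearMap.lTensor B (conv γ' γ)) (ρ b)) = b
  /-- (v) `γ(h) e_l = Σ e_{h₁ l} γ(h₂)` -/
  five : ∀ (h l : H) (ι : Type) (s : Finset ι) (h1 h2 : ι → H),
    Coalgebra.comul (R := k) h = ∑ i ∈ s, h1 i ⊗ₜ[k] h2 i →
    γ h * conv γ γ' l = ∑ i ∈ s, conv γ γ' (h1 i * l) * γ (h2 i)
  /-- (vi) `γ'(l) ẽ_h = Σ ẽ_{h l₁} γ'(l₂)` -/
  six : ∀ (h l : H) (κ : Type) (t : Finset κ) (l1 l2 : κ → H),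
    Coalgebra.comul (R := k) l = ∑ j ∈ t, l1 j ⊗ₜ[k] l2 j →
    γ' l * conv γ' γ h = ∑ j ∈ t, conv γ' γ (h * l1 j) * γ' (l2 j)
  /-- (vii) `Σ γ(h l₁) ẽ_{l₂} = Σ e_{h₁} γ(h₂ l)` -/
  seven : ∀ (h l : H) (ι κ : Type) (s : Finset ι) (t : Finset κ)
    (h1 h2 : ι → H) (l1 l2 : κ → H),
    Coalgebra.comul (R := k) h = ∑ i ∈ s, h1 i ⊗ₜ[k] h2 i →
    Coalgebra.comul (R := k) l = ∑ j ∈ t, l1 j ⊗ₜ[k] l2 j →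
    ∑ j ∈ t, γ (h * l1 j) * conv γ' γ (l2 j) =
      ∑ i ∈ s, conv γ γ' (h1 i) * γ (h2 i * l)

namespace Lemma55

variable {k H B : Type} [CommRing k] [Ring H] [HopfAlgebra k H]
    [Ring B] [Algebra k B]

lemma conv_def (f g : H →ₗ[k] B) (h : H) :
    conv f g h
      = LinearMap.mul' k B (TensorProduct.map f g (Coalgebra.comul (R := k) h)) := rfl

lemma master {M : Type} [AddCommGroup M] [Module k M]
    (Φ : (H ⊗[k] H) ⊗[k] H →ₗ[k] M) (Ψ : H ⊗[k] (H ⊗[k] H) →ₗ[k] M)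
    (hΦΨ : ∀ x y z : H, Φ ((x ⊗ₜ[k] y) ⊗ₜ[k] z) = Ψ (x ⊗ₜ[k] (y ⊗ₜ[k] z))) (h : H) :
    Φ ((Coalgebra.comul (R := k) (A := H)).rTensor H (Coalgebra.comul (R := k) h)) =
    Ψ ((Coalgebra.comul (R := k) (A := H)).lTensor H (Coalgebra.comul (R := k) h)) := by
  have h1 : Ψ ∘ₗ (TensorProduct.assoc k H H H).toLinearMap = Φ := by
    apply TensorProduct.ext_threefold
    intro x y z
    simp [hΦΨ]
  rw [← h1]
  simp only [LinearMap.coe_comp, LinearEquiv.coe_coe, Function.comp_apply,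
    Coalgebra.coassoc_apply]

lemma conv_assoc (f g p : H →ₗ[k] B) : conv (conv f g) p = conv f (conv g p) := by
  apply LinearMap.ext; intro l
  have hL : ∀ t : H ⊗[k] H,
      LinearMap.mul' k B (TensorProduct.map (conv f g) p t) =
      (LinearMap.mul' k B ∘ₗ
        TensorProduct.map (LinearMap.mul' k B ∘ₗ TensorProduct.map f g) p)
        ((Coalgebra.comul (R := k) (A := H)).rTensor H t) := by
    intro t
    induction t using TensorProduct.induction_on with
    | zero => simp
    | tmul x y => simp [conv]
    | add a b ha hb => simp [ha, hb]
  have hR : ∀ t : H ⊗[k] H,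
      LinearMap.mul' k B (TensorProduct.map f (conv g p) t) =
      (LinearMap.mul' k B ∘ₗ
        TensorProduct.map f (LinearMap.mul' k B ∘ₗ TensorProduct.map g p))
        ((Coalgebra.comul (R := k) (A := H)).lTensor H t) := by
    intro t
    induction t using TensorProduct.induction_on with
    | zero => simp
    | tmul x y => simp [conv]
    | add a b ha hb => simp [ha, hb]
  show LinearMap.mul' k B (TensorProduct.map (conv f g) p (Coalgebra.comul (R := k) l))
    = LinearMap.mul' k B (TensorProduct.map f (conv g p) (Coalgebra.comul (R := k) l))
  rw [hL, hR]
  exact master _ _ (fun x y z => by simp [mul_assoc]) l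

lemma gamma_conv {k H B : Type} [CommRing k] [Ring H] [HopfAlgebra k H]
    [Ring B] [Algebra k B] {ρ : B →ₗ[k] B ⊗[k] H} {γ γ' : H →ₗ[k] B}
    (hc : IsPartiallyCleft ρ γ γ') : conv γ (conv γ' γ) = γ := by
  apply LinearMap.ext; intro h
  have he := hc.expand (γ h)
  rw [hc.comod h] at he
  have hmap : ∀ t : H ⊗[k] H,
      TensorProduct.map γ (conv γ' γ) t
        = LinearMap.lTensor B (conv γ' γ) (TensorProduct.map γ LinearMap.id t) := by
    intro t
    induction t using TensorProduct.induction_on with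
    | zero => simp
    | tmul x y => simp
    | add a b ha hb => simp only [map_add, ha, hb]
  rw [conv_def, hmap, he]

lemma six' {k H B : Type} [CommRing k] [Ring H] [HopfAlgebra k H]
    [Ring B] [Algebra k B] {ρ : B →ₗ[k] B ⊗[k] H} {γ γ' : H →ₗ[k] B}
    (hc : IsPartiallyCleft ρ γ γ') (h l : H) :
    γ' l * conv γ' γ h =
      LinearMap.mul' k B (TensorProduct.map (conv γ' γ ∘ₗ LinearMap.mulLeft k h) γ'
        (Coalgebra.comul (R := k) l)) := by
  obtain ⟨S, hS⟩ := TensorProduct.exists_finset (Coalgebra.comul (R := k) l)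
  rw [hc.six h l (H × H) S Prod.fst Prod.snd hS, hS]
  simp [TensorProduct.map_tmul, LinearMap.mul'_apply]

lemma six_new' {k H B : Type} [CommRing k] [Ring H] [HopfAlgebra k H]
    [Ring B] [Algebra k B] {ρ : B →ₗ[k] B ⊗[k] H} {γ γ' : H →ₗ[k] B}
    (hc : IsPartiallyCleft ρ γ γ') (h l : H) :
    conv γ' (conv γ γ') l * conv γ' γ h =
      LinearMap.mul' k B (TensorProduct.map (conv γ' γ ∘ₗ LinearMap.mulLeft k h)
        (conv γ' (conv γ γ')) (Coalgebra.comul (R := k) l)) := by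
  have hL : ∀ t : H ⊗[k] H,
      LinearMap.mul' k B (TensorProduct.map γ' (conv γ γ') t) * conv γ' γ h =
      (LinearMap.mul' k B ∘ₗ
        TensorProduct.map
          (LinearMap.mul' k B ∘ₗ
            TensorProduct.map (conv γ' γ ∘ₗ LinearMap.mulLeft k h) γ')
          (conv γ γ'))
        ((Coalgebra.comul (R := k) (A := H)).rTensor H t) := by
    intro t
    induction t using TensorProduct.induction_on with
    | zero => simp
    | tmul x y =>
      have hcomm : conv γ' γ h * conv γ γ' y = conv γ γ' y * conv γ' γ h :=
        hc.conv'_comm h (conv γ γ' y) (hc.conv_coinv y)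
      have h6 := six' hc h x
      simp only [TensorProduct.map_tmul, LinearMap.mul'_apply,
        LinearMap.rTensor_tmul, LinearMap.coe_comp, Function.comp_apply]
      rw [mul_assoc, ← hcomm, ← mul_assoc, h6]
    | add a b ha hb =>
      simp only [map_add, LinearMap.add_apply, add_mul] at *
      rw [ha, hb]
  have hR : ∀ t : H ⊗[k] H,
      LinearMap.mul' k B (TensorProduct.map (conv γ' γ ∘ₗ LinearMap.mulLeft k h)
        (conv γ' (conv γ γ')) t) =
      (LinearMap.mul' k B ∘ₗ
        TensorProduct.map (conv γ' γ ∘ₗ LinearMap.mulLeft k h)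
          (LinearMap.mul' k B ∘ₗ TensorProduct.map γ' (conv γ γ')))
        ((Coalgebra.comul (R := k) (A := H)).lTensor H t) := by
    intro t
    induction t using TensorProduct.induction_on with
    | zero => simp
    | tmul x y => simp [conv]
    | add a b ha hb => simp [ha, hb]
  have hlhs : conv γ' (conv γ γ') l * conv γ' γ h =
      LinearMap.mul' k B (TensorProduct.map γ' (conv γ γ')
        (Coalgebra.comul (R := k) l)) * conv γ' γ h := rfl
  rw [hlhs, hL, hR]
  exact master _ _ (fun x y z => by simp [mul_assoc]) l

lemma comod'_new {k H B : Type} [CommRing k] [Ring H] [HopfAlgebra k H]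
    [Ring B] [Algebra k B] {ρ : B →ₗ[k] B ⊗[k] H} {γ γ' : H →ₗ[k] B}
    (hρ_mul : ∀ x y : B, ρ (x * y) = ρ x * ρ y)
    (hc : IsPartiallyCleft ρ γ γ') (h : H) :
    ρ (conv γ' (conv γ γ') h) =
      (TensorProduct.map (conv γ' (conv γ γ')) (HopfAlgebra.antipode (R := k)))
        ((TensorProduct.comm k H H) (Coalgebra.comul (R := k) h)) := by
  have hL : ∀ t : H ⊗[k] H,
      ρ (LinearMap.mul' k B (TensorProduct.map γ' (conv γ γ') t)) =
      (LinearMap.mul' k (B ⊗[k] H) ∘ₗ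
        TensorProduct.map
          (TensorProduct.map γ' (HopfAlgebra.antipode (R := k)) ∘ₗ
            (TensorProduct.comm k H H).toLinearMap)
          ((TensorProduct.mk k B H).flip (1 : H) ∘ₗ conv γ γ'))
        ((Coalgebra.comul (R := k) (A := H)).rTensor H t) := by
    intro t
    induction t using TensorProduct.induction_on with
    | zero => simp
    | tmul x y =>
      simp only [TensorProduct.map_tmul, LinearMap.mul'_apply, LinearMap.rTensor_tmul,
        LinearMap.coe_comp, Function.comp_apply, LinearEquiv.coe_coe,
        LinearMap.flip_apply, TensorProduct.mk_apply]
      rw [hρ_mul, hc.comod' x, hc.conv_coinv y]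
    | add a b ha hb =>
      simp only [map_add, LinearMap.add_apply] at *
      rw [ha, hb]
  have hR : ∀ t : H ⊗[k] H,
      (TensorProduct.map (conv γ' (conv γ γ')) (HopfAlgebra.antipode (R := k)))
        ((TensorProduct.comm k H H) t) =
      (TensorProduct.map (LinearMap.mul' k B ∘ₗ TensorProduct.map γ' (conv γ γ'))
          (HopfAlgebra.antipode (R := k)) ∘ₗ
        (TensorProduct.comm k H (H ⊗[k] H)).toLinearMap)
        ((Coalgebra.comul (R := k) (A := H)).lTensor H t) := by
    intro t
    induction t using TensorProduct.induction_on with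
    | zero => simp
    | tmul x y => simp [conv]
    | add a b ha hb => simp [ha, hb]
  have h0 : ρ (conv γ' (conv γ γ') h) =
      ρ (LinearMap.mul' k B (TensorProduct.map γ' (conv γ γ')
        (Coalgebra.comul (R := k) h))) := rfl
  rw [h0, hL, hR]
  refine master _ _ (fun x y z => ?_) h
  simp [LinearMap.mul'_apply, Algebra.TensorProduct.tmul_mul_tmul, conv]

end Lemma55

/-- Lemma 5.5: if `(γ, γ')` makes `A ⊆ B` a partially cleft extension, then
`γ̄ = γ' * γ * γ'` satisfies `γ̄ * γ * γ̄ = γ̄`, the pair `(γ, γ̄)` is again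
partially cleft, and `γ * γ̄ = γ * γ'`, `γ̄ * γ = γ' * γ`. -/
theorem partiallyCleft_normalize
    {k H B : Type} [CommRing k] [Ring H] [HopfAlgebra k H]
    [Ring B] [Algebra k B]
    (ρ : B →ₗ[k] B ⊗[k] H)
    (hρ_one : ρ 1 = 1 ⊗ₜ[k] 1)
    (hρ_mul : ∀ x y : B, ρ (x * y) = ρ x * ρ y)
    (hρ_coassoc : ∀ x : B,
      (TensorProduct.assoc k B H H) ((LinearMap.rTensor H ρ) (ρ x)) =
        (LinearMap.lTensor B (Coalgebra.comul (R := k))) (ρ x))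
    (hρ_counit : ∀ x : B,
      (TensorProduct.rid k B)
        ((LinearMap.lTensor B (Coalgebra.counit (R := k))) (ρ x)) = x)
    (γ γ' : H →ₗ[k] B)
    (hcleft : IsPartiallyCleft ρ γ γ') :
    conv (conv (conv γ' (conv γ γ')) γ) (conv γ' (conv γ γ')) =
        conv γ' (conv γ γ') ∧
    conv γ (conv γ' (conv γ γ')) = conv γ γ' ∧
    conv (conv γ' (conv γ γ')) γ = conv γ' γ ∧
    IsPartiallyCleft ρ γ (conv γ' (conv γ γ')) := by
  have hB : conv γ (conv γ' γ) = γ := Lemma55.gamma_conv hcleft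
  have claim2 : conv γ (conv γ' (conv γ γ')) = conv γ γ' := by
    calc conv γ (conv γ' (conv γ γ'))
        = conv (conv γ γ') (conv γ γ') := (Lemma55.conv_assoc γ γ' (conv γ γ')).symm
      _ = conv (conv (conv γ γ') γ) γ' := (Lemma55.conv_assoc (conv γ γ') γ γ').symm
      _ = conv (conv γ (conv γ' γ)) γ' := by rw [Lemma55.conv_assoc γ γ' γ]
      _ = conv γ γ' := by rw [hB]
  have claim3 : conv (conv γ' (conv γ γ')) γ = conv γ' γ := by
    calc conv (conv γ' (conv γ γ')) γ
        = conv γ' (conv (conv γ γ') γ) := Lemma55.conv_assoc γ' (conv γ γ') γ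
      _ = conv γ' (conv γ (conv γ' γ)) := by rw [Lemma55.conv_assoc γ γ' γ]
      _ = conv γ' γ := by rw [hB]
  have claim1 : conv (conv (conv γ' (conv γ γ')) γ) (conv γ' (conv γ γ')) =
      conv γ' (conv γ γ') := by
    rw [claim3, Lemma55.conv_assoc, claim2]
  refine ⟨claim1, claim2, claim3, ?_⟩
  constructor
  · exact hcleft.map_one
  · exact hcleft.comod
  · exact fun h => Lemma55.comod'_new hρ_mul hcleft h
  · intro h; rw [claim2]; exact hcleft.conv_coinv h
  · intro T hT; rw [claim2]; exact hcleft.conv_central T hT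
  · intro h a ha; rw [claim3]; exact hcleft.conv'_comm h a ha
  · intro b; rw [claim3]; exact hcleft.expand b
  · intro h l ι s h1 h2 hrep; rw [claim2]; exact hcleft.five h l ι s h1 h2 hrep
  · intro h l κ t l1 l2 hrep
    rw [claim3, Lemma55.six_new' hcleft h l, hrep]
    simp [TensorProduct.map_tmul, LinearMap.mul'_apply]
  · intro h l ι κ s t h1 h2 l1 l2 hh hl
    rw [claim3, claim2]
    exact hcleft.seven h l ι κ s t h1 h2 l1 l2 hh hl
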